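/- Let Y be an absolutely continuous real random variable with probability density function g and cumulative distribution function G. Fix c < d with G(d) > G(c), and let S = (c,d). If G is a log-concave function on the support of Y, then the conditional extropy J(Y|S) = -(1/2) ∫_c^d (g(y)/(G(d)-G(c)))^2 dy is an increasing function of d for fixed c; that is, for any c < d1 ≤ d2, J(Y | c < Y < d1) ≤ J(Y | c < Y < d2). -/

import Mathlib

open MeasureTheory Real Set Filter Topology

private lemma ae_hasDerivAt_cdf (g : ℝ → ℝ) (hg_int : Integrable g) (G : ℝ → ℝ)
    (hG : ∀ y, G y = ∫ t in Set.Iic y, g t) :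
    ∀ᵐ x, HasDerivAt G (g x) x := by
  have hloc := (IsUnifLocDoublingMeasure.vitaliFamily (volume : Measure ℝ) 1).ae_tendsto_average
    hg_int.locallyIntegrable
  filter_upwards [hloc] with x hx
  have hdiff : ∀ {u v : ℝ}, u ≤ v → G v - G u = ∫ t in Set.Ioc u v, g t := by
    intro u v huv
    rw [hG, hG, intervalIntegral.integral_Iic_sub_Iic hg_int.integrableOn hg_int.integrableOn,
      intervalIntegral.integral_of_le huv]
  have R : Tendsto (slope G x) (𝓝[>] x) (𝓝 (g x)) := by
    have h := hx.comp (Real.tendsto_Icc_vitaliFamily_right x)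
    apply h.congr'
    filter_upwards [self_mem_nhdsWithin] with y (hy : x < y)
    simp only [Function.comp_apply, setAverage_eq, integral_Icc_eq_integral_Ioc,
      Real.volume_Icc, smul_eq_mul]
    rw [slope_def_field, ← hdiff hy.le, Real.volume_real_Icc_of_le hy.le]
    rw [div_eq_inv_mul]
  have L : Tendsto (slope G x) (𝓝[<] x) (𝓝 (g x)) := by
    have h := hx.comp (Real.tendsto_Icc_vitaliFamily_left x)
    apply h.congr'
    filter_upwards [self_mem_nhdsWithin] with y (hy : y < x)
    simp only [Function.comp_apply, setAverage_eq, integral_Icc_eq_integral_Ioc,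
      Real.volume_Icc, smul_eq_mul]
    rw [slope_def_field, ← hdiff hy.le, Real.volume_real_Icc_of_le hy.le]
    have h1 : x - y ≠ 0 := sub_ne_zero.2 hy.ne'
    have h2 : y - x ≠ 0 := sub_ne_zero.2 hy.ne
    field_simp
    ring
  rw [hasDerivAt_iff_tendsto_slope, ← nhdsLT_sup_nhdsGT, tendsto_sup]
  exact ⟨L, R⟩

private lemma triangle_integral (g : ℝ → ℝ) (hg_nonneg : ∀ y, 0 ≤ g y)
    (hg_int : Integrable g) (x y : ℝ) :
    ∫ s in Set.Ioc x y, (g s * ∫ r in Set.Ioc x s, g r)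
      = (1/2) * (∫ s in Set.Ioc x y, g s) ^ 2 := by
  set ν : Measure ℝ := volume.restrict (Set.Ioc x y) with hν
  have hgν : Integrable g ν := hg_int.integrableOn
  set D : Set (ℝ × ℝ) := {p : ℝ × ℝ | p.2 ≤ p.1} with hD
  have hDm : MeasurableSet D := measurableSet_le measurable_snd measurable_fst
  set F : ℝ × ℝ → ℝ := fun p => D.indicator 1 p * (g p.1 * g p.2) with hF
  have hFint : Integrable F (ν.prod ν) := by
    refine Integrable.bdd_mul (hgν.mul_prod hgν)
      ((measurable_const.indicator hDm).aestronglyMeasurable) (c := 1) (Filter.Eventually.of_forall fun p => ?_)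
    by_cases h : p ∈ D <;> simp [Set.indicator_apply, h]
  have hswap : Integrable (fun p : ℝ × ℝ => F (p.2, p.1)) (ν.prod ν) := hFint.swap
  set T : ℝ := ∫ s in Set.Ioc x y, g s with hT
  -- the target equals the iterated integral of F
  have claim1 : ∫ s in Set.Ioc x y, (g s * ∫ r in Set.Ioc x s, g r)
      = ∫ s, (∫ r, F (s, r) ∂ν) ∂ν := by
    refine integral_congr_ae ?_
    filter_upwards [ae_restrict_mem measurableSet_Ioc] with s hs
    have h1 : ∀ r : ℝ, F (s, r) = (Set.Iic s).indicator (fun r => g s * g r) r := by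
      intro r
      by_cases h : r ≤ s <;>
        simp [hF, Set.indicator_apply, h, hD]
    calc g s * ∫ r in Set.Ioc x s, g r
        = ∫ r in Set.Ioc x s, g s * g r := by rw [integral_const_mul]
      _ = ∫ r in Set.Iic s, (fun r => g s * g r) r ∂ν := by
          rw [hν, Measure.restrict_restrict measurableSet_Iic, Set.inter_comm,
            Set.Ioc_inter_Iic, min_eq_right hs.2]
      _ = ∫ r, F (s, r) ∂ν := by
          rw [← integral_indicator measurableSet_Iic]
          exact integral_congr_ae (Filter.Eventually.of_forall fun r => (h1 r).symm)
  have claim2 : ∫ s, (∫ r, F (s, r) ∂ν) ∂ν = ∫ s, (∫ r, F (r, s) ∂ν) ∂ν := by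
    have := integral_integral_swap (f := fun s r => F (s, r)) (μ := ν) (ν := ν) hFint
    exact this
  have claim3 : (∫ s, (∫ r, F (s, r) ∂ν) ∂ν) + (∫ s, (∫ r, F (r, s) ∂ν) ∂ν) = T * T := by
    have hadd : (∫ s, (∫ r, F (s, r) ∂ν) ∂ν) + (∫ s, (∫ r, F (r, s) ∂ν) ∂ν)
        = ∫ s, ((∫ r, F (s, r) ∂ν) + (∫ r, F (r, s) ∂ν)) ∂ν :=
      (integral_add hFint.integral_prod_left hswap.integral_prod_left).symm
    rw [hadd]
    have key : ∀ᵐ s ∂ν, (∫ r, F (s, r) ∂ν) + (∫ r, F (r, s) ∂ν) = g s * T := by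
      filter_upwards [hFint.prod_left_ae, hswap.prod_left_ae] with s h1 h2
      rw [← integral_add h2 h1]
      have : ∀ᵐ r ∂ν, F (s, r) + F (r, s) = g s * g r := by
        have hsing : ν {s} = 0 := by
          rw [hν]; exact le_antisymm (le_trans (Measure.restrict_le_self _)
            (le_of_eq (Real.volume_singleton))) zero_le
        filter_upwards [measure_eq_zero_iff_ae_notMem.mp hsing] with r hr
        rcases lt_or_gt_of_ne (Ne.symm hr) with h | h
        · simp [hF, hD, Set.indicator_apply, h.le, not_le.2 h, mul_comm]
        · simp [hF, hD, Set.indicator_apply, h.le, not_le.2 h, mul_comm]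
      rw [integral_congr_ae this, integral_const_mul, hT, hν]
    rw [integral_congr_ae key, integral_mul_const, hT, hν]
  have h2 : T ^ 2 = T * T := sq T
  linarith [claim1, claim2, claim3]

section aux
variable (g G : ℝ → ℝ)

private lemma cdf_diff (hg_int : Integrable g) (hG : ∀ y, G y = ∫ t in Set.Iic y, g t)
    {u v : ℝ} (huv : u ≤ v) : G v - G u = ∫ t in Set.Ioc u v, g t := by
  rw [hG, hG, intervalIntegral.integral_Iic_sub_Iic hg_int.integrableOn hg_int.integrableOn,
    intervalIntegral.integral_of_le huv]

private lemma gG_integral (hg_nonneg : ∀ y, 0 ≤ g y) (hg_int : Integrable g)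
    (hG : ∀ y, G y = ∫ t in Set.Iic y, g t) {x y : ℝ} (hxy : x ≤ y) :
    ∫ s in Set.Ioc x y, g s * G s = (G y ^ 2 - G x ^ 2) / 2 := by
  have hH_mono : Monotone (fun s => ∫ r in Set.Ioc x s, g r) := by
    intro s s' hss'
    exact setIntegral_mono_set hg_int.integrableOn
      (Filter.Eventually.of_forall fun r => hg_nonneg r)
      (HasSubset.Subset.eventuallyLE (Set.Ioc_subset_Ioc le_rfl hss'))
  have hH_bdd : ∀ s : ℝ, ‖∫ r in Set.Ioc x s, g r‖ ≤ ∫ r, g r := by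
    intro s
    rw [Real.norm_eq_abs, abs_of_nonneg
      (setIntegral_nonneg measurableSet_Ioc fun r _ => hg_nonneg r)]
    exact setIntegral_le_integral hg_int (Filter.Eventually.of_forall fun r => hg_nonneg r)
  have hint2 : IntegrableOn (fun s => g s * ∫ r in Set.Ioc x s, g r) (Set.Ioc x y) := by
    have := Integrable.bdd_mul (𝕜 := ℝ) (hg_int.restrict (s := Set.Ioc x y))
      hH_mono.measurable.aestronglyMeasurable (c := ∫ r, g r) (Filter.Eventually.of_forall hH_bdd)
    exact this.congr (Filter.Eventually.of_forall fun s => mul_comm _ _)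
  have hint1 : IntegrableOn (fun s => g s * G x) (Set.Ioc x y) :=
    hg_int.integrableOn.mul_const _
  have hext : ∀ s ∈ Set.Ioc x y,
      g s * G s = g s * G x + g s * ∫ r in Set.Ioc x s, g r := by
    intro s hs
    have h := cdf_diff g G hg_int hG hs.1.le
    have h2 : G s = G x + ∫ r in Set.Ioc x s, g r := by linarith
    rw [h2, mul_add]
  calc ∫ s in Set.Ioc x y, g s * G s
      = ∫ s in Set.Ioc x y, (g s * G x + g s * ∫ r in Set.Ioc x s, g r) :=
        setIntegral_congr_fun measurableSet_Ioc hext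
    _ = (∫ s in Set.Ioc x y, g s * G x)
          + ∫ s in Set.Ioc x y, (g s * ∫ r in Set.Ioc x s, g r) :=
        integral_add hint1 hint2
    _ = (G y - G x) * G x + (1/2) * (G y - G x) ^ 2 := by
        rw [integral_mul_const, triangle_integral g hg_nonneg hg_int x y,
          ← cdf_diff g G hg_int hG hxy]
    _ = (G y ^ 2 - G x ^ 2) / 2 := by ring

end aux

/-- If the cumulative distribution function `G` of an absolutely continuous random
variable with density `g` is log-concave (on the set where `G > 0`), then the
conditional extropy `J(Y|(c,d)) = -(1/2) ∫_c^d (g y / (G d - G c))² dy` is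
increasing in `d` for fixed `c`. -/
theorem conditional_extropy_increasing_of_logConcave_cdf
    (g G : ℝ → ℝ)
    (hg_nonneg : ∀ y, 0 ≤ g y)
    (hg_int : Integrable g)
    (hG : ∀ y, G y = ∫ t in Set.Iic y, g t)
    (hlc : ConcaveOn ℝ {y : ℝ | 0 < G y} (fun y => Real.log (G y)))
    (c d₁ d₂ : ℝ) (hcd₁ : c < d₁) (hd : d₁ ≤ d₂)
    (hG₁ : G c < G d₁) (hG₂ : G c < G d₂) :
    -(1 / 2) * ∫ y in c..d₁, (g y / (G d₁ - G c)) ^ 2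
      ≤ -(1 / 2) * ∫ y in c..d₂, (g y / (G d₂ - G c)) ^ 2 := by
  have hcd₂ : c < d₂ := hcd₁.trans_le hd
  have hmono : Monotone G := by
    intro u v huv
    have h := cdf_diff g G hg_int hG huv
    have h2 : 0 ≤ ∫ t in Set.Ioc u v, g t :=
      setIntegral_nonneg measurableSet_Ioc fun t _ => hg_nonneg t
    linarith
  have hGnonneg : ∀ y, 0 ≤ G y := by
    intro y; rw [hG]
    exact setIntegral_nonneg measurableSet_Iic fun t _ => hg_nonneg t
  have hΔ₁ : 0 < G d₁ - G c := sub_pos.2 hG₁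
  have hΔ₂ : 0 < G d₂ - G c := sub_pos.2 hG₂
  by_cases hint2 : IntegrableOn (fun y => g y ^ 2) (Set.Ioc c d₂)
  · -- main case
    have hint1 : IntegrableOn (fun y => g y ^ 2) (Set.Ioc c d₁) :=
      hint2.mono_set (Set.Ioc_subset_Ioc le_rfl hd)
    have hintA : IntegrableOn (fun y => g y ^ 2) (Set.Ioc d₁ d₂) :=
      hint2.mono_set (Set.Ioc_subset_Ioc hcd₁.le le_rfl)
    set I₁ : ℝ := ∫ s in Set.Ioc c d₁, g s ^ 2 with hI₁def
    set A : ℝ := ∫ t in Set.Ioc d₁ d₂, g t ^ 2 with hAdef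
    have hI₁nonneg : 0 ≤ I₁ := setIntegral_nonneg measurableSet_Ioc fun s _ => sq_nonneg _
    have hAnonneg : 0 ≤ A := setIntegral_nonneg measurableSet_Ioc fun s _ => sq_nonneg _
    -- integrability of g * G on subintervals
    have hGbdd : ∀ s : ℝ, ‖G s‖ ≤ ∫ r, g r := by
      intro s
      rw [Real.norm_eq_abs, abs_of_nonneg (hGnonneg s), hG]
      exact setIntegral_le_integral hg_int (Filter.Eventually.of_forall fun r => hg_nonneg r)
    have hgG : ∀ u v : ℝ, IntegrableOn (fun s => g s * G s) (Set.Ioc u v) := by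
      intro u v
      have := Integrable.bdd_mul (𝕜 := ℝ) (hg_int.restrict (s := Set.Ioc u v))
        hmono.measurable.aestronglyMeasurable (c := ∫ r, g r) (Filter.Eventually.of_forall hGbdd)
      exact this.congr (Filter.Eventually.of_forall fun s => mul_comm _ _)
    -- key pointwise inequality from log-concavity
    have keyst : ∀ s t : ℝ, HasDerivAt G (g s) s → HasDerivAt G (g t) t →
        s ∈ Set.Ioc c d₁ → t ∈ Set.Ioc d₁ d₂ → g t * G s ≤ g s * G t := by
      intro s t hds hdt hs ht
      have hst : s < t := lt_of_le_of_lt hs.2 ht.1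
      by_cases hGs : 0 < G s
      · have hGt : 0 < G t := lt_of_lt_of_le hGs (hmono hst.le)
        have hφs : HasDerivAt (fun y => Real.log (G y)) (g s / G s) s := hds.log hGs.ne'
        have hφt : HasDerivAt (fun y => Real.log (G y)) (g t / G t) t := hdt.log hGt.ne'
        have h1 := hlc.slope_le_of_hasDerivAt hGs hGt hst hφs
        have h2 := hlc.le_slope_of_hasDerivAt hGs hGt hst hφt
        have h3 : g t / G t ≤ g s / G s := h2.trans h1
        rwa [div_le_div_iff₀ hGt hGs] at h3
      · have hGs0 : G s = 0 := le_antisymm (not_lt.mp hGs) (hGnonneg s)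
        rw [hGs0, mul_zero]
        exact mul_nonneg (hg_nonneg s) (hGnonneg t)
    have hae := ae_hasDerivAt_cdf g hg_int G hG
    set P : ℝ := ∫ s in Set.Ioc c d₁, g s * G s with hPdef
    set Q : ℝ := ∫ t in Set.Ioc d₁ d₂, g t * G t with hQdef
    -- step 2: for good t, g t ^ 2 * P ≤ (g t * G t) * I₁
    have step2 : ∀ t : ℝ, HasDerivAt G (g t) t → t ∈ Set.Ioc d₁ d₂ →
        g t ^ 2 * P ≤ (g t * G t) * I₁ := by
      intro t hdt ht
      have h : g t * P ≤ G t * I₁ := by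
        rw [hPdef, hI₁def, ← integral_const_mul, ← integral_const_mul]
        refine setIntegral_mono_ae_restrict ((hgG c d₁).const_mul _)
          (hint1.const_mul _) ?_
        filter_upwards [ae_restrict_mem measurableSet_Ioc, ae_restrict_of_ae hae] with s hs hds
        have := keyst s t hds hdt hs ht
        nlinarith [hg_nonneg s, this]
      nlinarith [mul_le_mul_of_nonneg_left h (hg_nonneg t)]
    -- step 3: A * P ≤ Q * I₁
    have step3 : A * P ≤ Q * I₁ := by
      rw [hAdef, hQdef, ← integral_mul_const, ← integral_mul_const]
      refine setIntegral_mono_ae_restrict (hintA.mul_const _) ((hgG d₁ d₂).mul_const _) ?_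
      filter_upwards [ae_restrict_mem measurableSet_Ioc, ae_restrict_of_ae hae] with t ht hdt
      exact step2 t hdt ht
    -- step 4: values of P and Q
    have hP : P = (G d₁ ^ 2 - G c ^ 2) / 2 := gG_integral g G hg_nonneg hg_int hG hcd₁.le
    have hQ : Q = (G d₂ ^ 2 - G d₁ ^ 2) / 2 := gG_integral g G hg_nonneg hg_int hG hd
    -- step 5: algebra
    have hbe : G d₁ ≤ G d₂ := hmono hd
    have halg : (I₁ + A) * (G d₁ - G c) ^ 2 ≤ I₁ * (G d₂ - G c) ^ 2 := by
      rw [hP, hQ] at step3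
      have key2 : A * (G d₁ ^ 2 - G c ^ 2) ≤ (G d₂ ^ 2 - G d₁ ^ 2) * I₁ := by linarith
      have h1 := mul_le_mul_of_nonneg_right key2 (sub_nonneg.2 hG₁.le)
      have h4 : 0 ≤ I₁ * G c * ((G d₂ - G d₁) * (G d₂ - G c)) :=
        mul_nonneg (mul_nonneg hI₁nonneg (hGnonneg c))
          (mul_nonneg (sub_nonneg.2 hbe) hΔ₂.le)
      have hba : (0:ℝ) < G d₁ + G c := by linarith [hGnonneg c]
      have final' : (I₁ + A) * (G d₁ - G c) ^ 2 * (G d₁ + G c)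
          ≤ I₁ * (G d₂ - G c) ^ 2 * (G d₁ + G c) := by nlinarith [h1, h4]
      exact le_of_mul_le_mul_right final' hba
    -- step 6: convert the goal
    have hsplit : ∫ s in Set.Ioc c d₂, g s ^ 2 = I₁ + A := by
      rw [hI₁def, hAdef, ← setIntegral_union (Set.Ioc_disjoint_Ioc_of_le le_rfl) measurableSet_Ioc
        hint1 hintA, Set.Ioc_union_Ioc_eq_Ioc hcd₁.le hd]
    have e₁ : ∫ y in c..d₁, (g y / (G d₁ - G c)) ^ 2 = I₁ / (G d₁ - G c) ^ 2 := by
      rw [intervalIntegral.integral_of_le hcd₁.le]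
      simp_rw [div_pow]
      rw [integral_div]
    have e₂ : ∫ y in c..d₂, (g y / (G d₂ - G c)) ^ 2 = (I₁ + A) / (G d₂ - G c) ^ 2 := by
      rw [intervalIntegral.integral_of_le hcd₂.le]
      simp_rw [div_pow]
      rw [integral_div, hsplit]
    rw [e₁, e₂]
    have hdiv : (I₁ + A) / (G d₂ - G c) ^ 2 ≤ I₁ / (G d₁ - G c) ^ 2 := by
      rw [div_le_div_iff₀ (by positivity) (by positivity)]
      linarith [halg]
    linarith [hdiv]
  · -- non-integrable case: RHS integral is 0, LHS integral is nonneg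
    have hR : ∫ y in c..d₂, (g y / (G d₂ - G c)) ^ 2 = 0 := by
      apply intervalIntegral.integral_undef
      intro hii
      apply hint2
      have h := (intervalIntegrable_iff_integrableOn_Ioc_of_le hcd₂.le).mp hii
      have h2 := h.const_mul ((G d₂ - G c) ^ 2)
      refine h2.congr (Filter.Eventually.of_forall fun s => ?_)
      field_simp
    have hL : 0 ≤ ∫ y in c..d₁, (g y / (G d₁ - G c)) ^ 2 :=
      intervalIntegral.integral_nonneg hcd₁.le fun s _ => sq_nonneg _
    rw [hR]
    nlinarith [hL]
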